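/- For integers m, n > 1 (with n ≥ 3), the sparing number of the (m,n)-cone C_n + K̄_m is n. -/

import Mathlib

open Pointwise

/-- The induced set-label on (potential) edges: the sumset of the end-vertex labels. -/
def edgeLabel {V : Type*} (f : V → Finset ℕ) : Sym2 V → Finset ℕ :=
  Sym2.lift ⟨fun u v => f u + f v, fun u v => add_comm (f u) (f v)⟩

/-- An integer additive set-indexer (IASI) of a simple graph `G`: an injective assignment
of nonempty finite sets of non-negative integers to the vertices such that the induced
sumset-labeling of the edges is also injective. -/
structure IsIASI {V : Type*} (G : SimpleGraph V) (f : V → Finset ℕ) : Prop where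
  nonempty : ∀ v, (f v).Nonempty
  inj : Function.Injective f
  edgeInj : Set.InjOn (edgeLabel f) G.edgeSet

/-- A weak IASI: an IASI for which every edge label has cardinality equal to the maximum of
the cardinalities of the labels of its end vertices. -/
structure IsWeakIASI {V : Type*} (G : SimpleGraph V) (f : V → Finset ℕ) extends
    IsIASI G f : Prop where
  weak : ∀ ⦃u v⦄, G.Adj u v → (f u + f v).card = max (f u).card (f v).card

/-- The number of mono-indexed edges of `G` under the labeling `f`, i.e. the number of
edges whose set-label is a singleton. -/
noncomputable def monoEdgeCount {V : Type*} (G : SimpleGraph V) (f : V → Finset ℕ) : ℕ :=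
  {e ∈ G.edgeSet | (edgeLabel f e).card = 1}.ncard

/-- The sparing number of `G`: the minimum number of mono-indexed edges taken over all
weak IASIs of `G`. -/
noncomputable def sparingNumber {V : Type*} (G : SimpleGraph V) : ℕ :=
  sInf {k | ∃ f : V → Finset ℕ, IsWeakIASI G f ∧ monoEdgeCount G f = k}

/-- The join `G + H` of two graphs on disjoint vertex sets: all vertices and edges of
`G` and `H`, together with every edge joining a vertex of `G` to a vertex of `H`. -/
def graphJoin {V W : Type*} (G : SimpleGraph V) (H : SimpleGraph W) :
    SimpleGraph (V ⊕ W) where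
  Adj x y :=
    match x, y with
    | Sum.inl a, Sum.inl b => G.Adj a b
    | Sum.inr a, Sum.inr b => H.Adj a b
    | Sum.inl _, Sum.inr _ => True
    | Sum.inr _, Sum.inl _ => True
  symm := ⟨by
    rintro (a | a) (b | b) h
    · exact G.adj_symm h
    · trivial
    · trivial
    · exact H.adj_symm h⟩
  loopless := ⟨by
    rintro (a | a) h
    · exact G.irrefl h
    · exact H.irrefl h⟩


open Finset in
lemma weak_card_one {A B : Finset ℕ} (hA : A.Nonempty) (hB : B.Nonempty)
    (h : (A + B).card = max A.card B.card) : A.card = 1 ∨ B.card = 1 := by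
  by_contra hc
  push_neg at hc
  have h1 := hA.card_pos
  have h2 := hB.card_pos
  have h3 := cauchy_davenport_add_of_linearOrder_isCancelAdd hA hB
  omega

lemma two_pow_add_two_pow_inj : ∀ i j k l : ℕ, i < j → k < l →
    2 ^ i + 2 ^ j = 2 ^ k + 2 ^ l → i = k ∧ j = l := by
  intro i
  induction i with
  | zero =>
    intro j k l hij hkl h
    have hk : k = 0 := by
      by_contra hk
      have d1 : 2 ∣ 2 ^ k := dvd_pow_self 2 hk
      have d2 : 2 ∣ 2 ^ l := dvd_pow_self 2 (by omega)
      have d3 : 2 ∣ 2 ^ j := dvd_pow_self 2 (by omega)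
      simp only [pow_zero] at h
      omega
    subst hk
    simp only [pow_zero] at h
    have hjl : 2 ^ j = 2 ^ l := by omega
    exact ⟨rfl, Nat.pow_right_injective (le_refl 2) hjl⟩
  | succ i ih =>
    intro j k l hij hkl h
    have hk : k ≠ 0 := by
      intro hk
      have d1 : 2 ∣ 2 ^ (i + 1) := dvd_pow_self 2 (by omega)
      have d2 : 2 ∣ 2 ^ j := dvd_pow_self 2 (by omega)
      have d3 : 2 ∣ 2 ^ l := dvd_pow_self 2 (by omega)
      rw [hk, pow_zero] at h
      omega
    obtain ⟨k', rfl⟩ : ∃ k', k = k' + 1 := ⟨k - 1, by omega⟩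
    obtain ⟨j', rfl⟩ : ∃ j', j = j' + 1 := ⟨j - 1, by omega⟩
    obtain ⟨l', rfl⟩ : ∃ l', l = l' + 1 := ⟨l - 1, by omega⟩
    simp only [pow_succ] at h
    have h' : 2 ^ i + 2 ^ j' = 2 ^ k' + 2 ^ l' := by omega
    obtain ⟨e1, e2⟩ := ih j' k' l' (by omega) (by omega) h'
    omega

lemma two_pow_add_eq {a b c d : ℕ} (hab : a ≠ b) (hcd : c ≠ d)
    (h : 2 ^ a + 2 ^ b = 2 ^ c + 2 ^ d) : a = c ∧ b = d ∨ a = d ∧ b = c := by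
  rcases hab.lt_or_gt with h1 | h1 <;> rcases hcd.lt_or_gt with h2 | h2
  · exact Or.inl (two_pow_add_two_pow_inj a b c d h1 h2 h)
  · obtain ⟨e1, e2⟩ := two_pow_add_two_pow_inj a b d c h1 h2 (by omega)
    exact Or.inr ⟨e1, e2⟩
  · obtain ⟨e1, e2⟩ := two_pow_add_two_pow_inj b a c d h1 h2 (by omega)
    exact Or.inr ⟨e2, e1⟩
  · obtain ⟨e1, e2⟩ := two_pow_add_two_pow_inj b a d c h1 h2 (by omega)
    exact Or.inl ⟨e2, e1⟩

/-- For integers `m, n > 1` with `n ≥ 3`, the sparing number of the `(m,n)`-cone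
`C_n + K̄_m` is `n`. -/
theorem cone_sparingNumber (m n : ℕ) (hm : 1 < m) (hn : 3 ≤ n) :
    sparingNumber
      (graphJoin (SimpleGraph.cycleGraph n) (⊥ : SimpleGraph (Fin m))) = n := by
  classical
  obtain ⟨n', rfl⟩ : ∃ n', n = n' + 2 := ⟨n - 2, by omega⟩
  have hn' : 1 ≤ n' := by omega
  set G := graphJoin (SimpleGraph.cycleGraph (n' + 2)) (⊥ : SimpleGraph (Fin m)) with hG
  -- basic adjacency facts
  have hadj_join : ∀ (i : Fin (n' + 2)) (j : Fin m), G.Adj (Sum.inl i) (Sum.inr j) :=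
    fun i j => trivial
  have hadj_cyc : ∀ i : Fin (n' + 2), G.Adj (Sum.inl i) (Sum.inl (i + 1)) := by
    intro i
    show (SimpleGraph.cycleGraph (n' + 2)).Adj i (i + 1)
    rw [SimpleGraph.cycleGraph_adj]
    right
    exact add_sub_cancel_left i 1
  have h2ne : (1 + 1 : Fin (n' + 2)) ≠ 0 := by
    intro h
    have hv := congrArg Fin.val h
    rw [Fin.val_add, Fin.val_one, Fin.val_zero, Nat.mod_eq_of_lt (by omega)] at hv
    omega
  have hSinj : Function.Injective
      (fun i : Fin (n' + 2) => (s(Sum.inl i, Sum.inl (i + 1)) : Sym2 (Fin (n' + 2) ⊕ Fin m))) := by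
    intro i j hij
    simp only [Sym2.eq_iff] at hij
    rcases hij with ⟨h1, -⟩ | ⟨h1, h2⟩
    · exact Sum.inl.inj h1
    · exfalso
      apply h2ne
      have e1 : i = j + 1 := Sum.inl.inj h1
      have e2 : i + 1 = j := Sum.inl.inj h2
      have : j + (1 + 1) = j + 0 := by
        rw [add_zero, ← add_assoc, ← e1, e2]
      exact add_left_cancel this
  have hmono : ∀ A B : Finset ℕ, A.card = 1 → B.card = 1 → (A + B).card = 1 := by
    intro A B hA hB
    obtain ⟨a, rfl⟩ := Finset.card_eq_one.mp hA
    obtain ⟨b, rfl⟩ := Finset.card_eq_one.mp hB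
    rw [Finset.singleton_add_singleton]
    exact Finset.card_singleton _
  -- structure of edges
  have hrep : ∀ e ∈ G.edgeSet,
      (∃ i : Fin (n' + 2), e = s(Sum.inl i, Sum.inl (i + 1))) ∨
      (∃ (i : Fin (n' + 2)) (j : Fin m), e = s(Sum.inl i, Sum.inr j)) := by
    intro e
    induction e using Sym2.ind with
    | _ u v =>
      intro he
      rw [SimpleGraph.mem_edgeSet] at he
      rcases u with i | j <;> rcases v with i' | j'
      · have hc : (SimpleGraph.cycleGraph (n' + 2)).Adj i i' := he
        rw [SimpleGraph.cycleGraph_adj] at hc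
        rcases hc with hc | hc
        · rw [sub_eq_iff_eq_add] at hc
          left
          exact ⟨i', by rw [hc, add_comm 1 i']; exact Sym2.eq_swap⟩
        · rw [sub_eq_iff_eq_add] at hc
          left
          exact ⟨i, by rw [hc, add_comm 1 i]⟩
      · exact Or.inr ⟨i, j', rfl⟩
      · exact Or.inr ⟨i', j, Sym2.eq_swap⟩
      · exact (he : (⊥ : SimpleGraph (Fin m)).Adj j j').elim
  -- lower bound
  have hlow : ∀ f, IsWeakIASI G f → n' + 2 ≤ monoEdgeCount G f := by
    intro f hf
    have hone : ∀ u v, G.Adj u v → (f u).card = 1 ∨ (f v).card = 1 :=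
      fun u v h => weak_card_one (hf.nonempty u) (hf.nonempty v) (hf.weak h)
    have hcardpos : ∀ v, 1 ≤ (f v).card := fun v => (hf.nonempty v).card_pos
    by_cases hall : ∀ i : Fin (n' + 2), (f (Sum.inl i)).card = 1
    · set F : Finset (Sym2 (Fin (n' + 2) ⊕ Fin m)) :=
        Finset.univ.image (fun i : Fin (n' + 2) => s(Sum.inl i, Sum.inl (i + 1))) with hF
      have hFcard : F.card = n' + 2 := by
        rw [hF, Finset.card_image_of_injective _ hSinj, Finset.card_univ, Fintype.card_fin]
      have hsub : (↑F : Set (Sym2 (Fin (n' + 2) ⊕ Fin m))) ⊆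
          {e ∈ G.edgeSet | (edgeLabel f e).card = 1} := by
        intro e he
        rw [Finset.mem_coe, hF, Finset.mem_image] at he
        obtain ⟨i, -, rfl⟩ := he
        exact ⟨(SimpleGraph.mem_edgeSet G).mpr (hadj_cyc i), hmono _ _ (hall i) (hall (i + 1))⟩
      calc n' + 2 = F.card := hFcard.symm
        _ = (↑F : Set (Sym2 (Fin (n' + 2) ⊕ Fin m))).ncard := (Set.ncard_coe_finset F).symm
        _ ≤ monoEdgeCount G f := Set.ncard_le_ncard hsub (Set.toFinite _)
    · push_neg at hall
      obtain ⟨v, hv⟩ := hall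
      have hv2 : 2 ≤ (f (Sum.inl v)).card := by
        have := hcardpos (Sum.inl v); omega
      have hinr : ∀ j : Fin m, (f (Sum.inr j)).card = 1 := by
        intro j
        rcases hone _ _ (hadj_join v j) with h | h
        · omega
        · exact h
      set T : Finset (Fin (n' + 2)) :=
        Finset.univ.filter (fun i => (f (Sum.inl i)).card = 1) with hT
      have hTbig : n' + 2 ≤ 2 * T.card := by
        have hmap : ∀ i : Fin (n' + 2), i ∈ Tᶜ → (i + 1) ∈ T := by
          intro i hi
          rw [Finset.mem_compl, hT, Finset.mem_filter] at hi
          rw [hT, Finset.mem_filter]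
          refine ⟨Finset.mem_univ _, ?_⟩
          rcases hone _ _ (hadj_cyc i) with h | h
          · exact absurd ⟨Finset.mem_univ i, h⟩ hi
          · exact h
        have hle : Tᶜ.card ≤ T.card :=
          Finset.card_le_card_of_injOn (· + 1) hmap
            (fun a _ b _ h => add_left_injective 1 h)
        have hcc : Tᶜ.card = Fintype.card (Fin (n' + 2)) - T.card := Finset.card_compl T
        have hTle : T.card ≤ n' + 2 := by
          have := Finset.card_le_univ T
          simpa using this
        rw [Fintype.card_fin] at hcc
        omega
      set F : Finset (Sym2 (Fin (n' + 2) ⊕ Fin m)) :=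
        (T ×ˢ (Finset.univ : Finset (Fin m))).image
          (fun p : Fin (n' + 2) × Fin m => s(Sum.inl p.1, Sum.inr p.2)) with hF
      have hFcard : F.card = T.card * m := by
        rw [hF, Finset.card_image_of_injOn, Finset.card_product, Finset.card_univ,
          Fintype.card_fin]
        intro p _ q _ h
        simp only [Sym2.eq_iff] at h
        rcases h with ⟨h1, h2⟩ | ⟨h1, h2⟩
        · exact Prod.ext (Sum.inl.inj h1) (Sum.inr.inj h2)
        · exact absurd h1 (by simp)
      have hsub : (↑F : Set (Sym2 (Fin (n' + 2) ⊕ Fin m))) ⊆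
          {e ∈ G.edgeSet | (edgeLabel f e).card = 1} := by
        intro e he
        rw [Finset.mem_coe, hF, Finset.mem_image] at he
        obtain ⟨⟨i, j⟩, hij, rfl⟩ := he
        rw [Finset.mem_product] at hij
        have hiT : (f (Sum.inl i)).card = 1 := by
          have := hij.1
          rw [hT, Finset.mem_filter] at this
          exact this.2
        exact ⟨(SimpleGraph.mem_edgeSet G).mpr (hadj_join i j), hmono _ _ hiT (hinr j)⟩
      calc n' + 2 ≤ 2 * T.card := hTbig
        _ ≤ m * T.card := Nat.mul_le_mul_right _ (by omega)
        _ = T.card * m := mul_comm _ _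
        _ = F.card := hFcard.symm
        _ = (↑F : Set (Sym2 (Fin (n' + 2) ⊕ Fin m))).ncard := (Set.ncard_coe_finset F).symm
        _ ≤ monoEdgeCount G f := Set.ncard_le_ncard hsub (Set.toFinite _)
  -- the construction
  set M := 2 ^ (n' + 2) with hM
  have hMpos : 0 < M := Nat.pow_pos (by norm_num)
  set f₀ : (Fin (n' + 2) ⊕ Fin m) → Finset ℕ :=
    Sum.elim (fun i => ({2 ^ (i : ℕ)} : Finset ℕ))
      (fun j => ({0, M * ((j : ℕ) + 1)} : Finset ℕ)) with hf₀
  have hXpos : ∀ j : Fin m, 0 < M * ((j : ℕ) + 1) :=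
    fun j => Nat.mul_pos hMpos (by omega)
  have hpowlt : ∀ i : Fin (n' + 2), 2 ^ (i : ℕ) < M :=
    fun i => Nat.pow_lt_pow_right (by norm_num) i.isLt
  have hjoinlabel : ∀ (i : Fin (n' + 2)) (j : Fin m),
      f₀ (Sum.inl i) + f₀ (Sum.inr j) =
        {2 ^ (i : ℕ), 2 ^ (i : ℕ) + M * ((j : ℕ) + 1)} := by
    intro i j
    show ({2 ^ (i : ℕ)} : Finset ℕ) + {0, M * ((j : ℕ) + 1)} = _
    rw [Finset.insert_eq, Finset.add_union, Finset.singleton_add_singleton,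
      Finset.singleton_add_singleton, add_zero, ← Finset.insert_eq]
  have hjoincard : ∀ (i : Fin (n' + 2)) (j : Fin m),
      (f₀ (Sum.inl i) + f₀ (Sum.inr j)).card = 2 := by
    intro i j
    rw [hjoinlabel i j]
    exact Finset.card_pair (by have := hXpos j; omega)
  have hcyclabel : ∀ i i' : Fin (n' + 2),
      f₀ (Sum.inl i) + f₀ (Sum.inl i') = {2 ^ (i : ℕ) + 2 ^ (i' : ℕ)} := by
    intro i i'
    show ({2 ^ (i : ℕ)} : Finset ℕ) + {2 ^ (i' : ℕ)} = _
    rw [Finset.singleton_add_singleton]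
  have hWeak : IsWeakIASI G f₀ := by
    refine ⟨⟨?_, ?_, ?_⟩, ?_⟩
    · rintro (i | j)
      · exact Finset.singleton_nonempty _
      · exact Finset.insert_nonempty _ _
    · rintro (i | j) (i' | j') h
      · have h' : ({2 ^ (i : ℕ)} : Finset ℕ) = {2 ^ (i' : ℕ)} := h
        have := Nat.pow_right_injective (le_refl 2) (Finset.singleton_injective h')
        exact congrArg Sum.inl (Fin.val_injective this)
      · exfalso
        have hc := congrArg Finset.card h
        have h1 : (f₀ (Sum.inl i)).card = 1 := Finset.card_singleton _
        have h2 : (f₀ (Sum.inr j')).card = 2 :=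
          Finset.card_pair (by have := hXpos j'; omega)
        omega
      · exfalso
        have hc := congrArg Finset.card h
        have h1 : (f₀ (Sum.inl i')).card = 1 := Finset.card_singleton _
        have h2 : (f₀ (Sum.inr j)).card = 2 :=
          Finset.card_pair (by have := hXpos j; omega)
        omega
      · have h' : ({0, M * ((j : ℕ) + 1)} : Finset ℕ) = {0, M * ((j' : ℕ) + 1)} := h
        have hmem : M * ((j : ℕ) + 1) ∈ ({0, M * ((j' : ℕ) + 1)} : Finset ℕ) := by
          rw [← h']
          simp
        simp only [Finset.mem_insert, Finset.mem_singleton] at hmem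
        rcases hmem with hmem | hmem
        · exact absurd hmem (by have := hXpos j; omega)
        · have := Nat.eq_of_mul_eq_mul_left hMpos hmem
          exact congrArg Sum.inr (Fin.val_injective (by omega))
    · intro e₁ he₁ e₂ he₂ hl
      rcases hrep e₁ he₁ with ⟨i, rfl⟩ | ⟨i, j, rfl⟩ <;>
        rcases hrep e₂ he₂ with ⟨i', rfl⟩ | ⟨i', j', rfl⟩
      · have hl' : ({2 ^ (i : ℕ) + 2 ^ (((i + 1) : Fin (n' + 2)) : ℕ)} : Finset ℕ) =
            {2 ^ (i' : ℕ) + 2 ^ (((i' + 1) : Fin (n' + 2)) : ℕ)} := by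
          have e1 := hcyclabel i (i + 1)
          have e2 := hcyclabel i' (i' + 1)
          calc ({2 ^ (i : ℕ) + 2 ^ (((i + 1) : Fin (n' + 2)) : ℕ)} : Finset ℕ)
              = f₀ (Sum.inl i) + f₀ (Sum.inl (i + 1)) := e1.symm
            _ = f₀ (Sum.inl i') + f₀ (Sum.inl (i' + 1)) := hl
            _ = _ := e2
        have hsum := Finset.singleton_injective hl'
        have hne1 : (i : ℕ) ≠ (((i + 1) : Fin (n' + 2)) : ℕ) := by
          intro hh
          have : i = i + 1 := Fin.val_injective hh
          have h0 : (1 : Fin (n' + 2)) = 0 := (left_eq_add.mp this)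
          have := congrArg Fin.val h0
          rw [Fin.val_one, Fin.val_zero] at this
          omega
        have hne2 : (i' : ℕ) ≠ (((i' + 1) : Fin (n' + 2)) : ℕ) := by
          intro hh
          have : i' = i' + 1 := Fin.val_injective hh
          have h0 : (1 : Fin (n' + 2)) = 0 := (left_eq_add.mp this)
          have := congrArg Fin.val h0
          rw [Fin.val_one, Fin.val_zero] at this
          omega
        rcases two_pow_add_eq hne1 hne2 hsum with ⟨e1, e2⟩ | ⟨e1, e2⟩
        · rw [Sym2.eq_iff]
          exact Or.inl ⟨congrArg Sum.inl (Fin.val_injective e1),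
            congrArg Sum.inl (Fin.val_injective e2)⟩
        · rw [Sym2.eq_iff]
          exact Or.inr ⟨congrArg Sum.inl (Fin.val_injective e1),
            congrArg Sum.inl (Fin.val_injective e2)⟩
      · exfalso
        have hc := congrArg Finset.card hl
        have h1 : (edgeLabel f₀ s(Sum.inl i, Sum.inl (i + 1))).card = 1 := by
          show (f₀ (Sum.inl i) + f₀ (Sum.inl (i + 1))).card = 1
          rw [hcyclabel]
          exact Finset.card_singleton _
        have h2 : (edgeLabel f₀ s(Sum.inl i', Sum.inr j')).card = 2 := hjoincard i' j'
        omega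
      · exfalso
        have hc := congrArg Finset.card hl
        have h1 : (edgeLabel f₀ s(Sum.inl i, Sum.inr j)).card = 2 := hjoincard i j
        have h2 : (edgeLabel f₀ s(Sum.inl i', Sum.inl (i' + 1))).card = 1 := by
          show (f₀ (Sum.inl i') + f₀ (Sum.inl (i' + 1))).card = 1
          rw [hcyclabel]
          exact Finset.card_singleton _
        omega
      · have hl' : ({2 ^ (i : ℕ), 2 ^ (i : ℕ) + M * ((j : ℕ) + 1)} : Finset ℕ) =
            {2 ^ (i' : ℕ), 2 ^ (i' : ℕ) + M * ((j' : ℕ) + 1)} := by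
          calc ({2 ^ (i : ℕ), 2 ^ (i : ℕ) + M * ((j : ℕ) + 1)} : Finset ℕ)
              = f₀ (Sum.inl i) + f₀ (Sum.inr j) := (hjoinlabel i j).symm
            _ = f₀ (Sum.inl i') + f₀ (Sum.inr j') := hl
            _ = _ := hjoinlabel i' j'
        have hmem1 : (2 : ℕ) ^ (i : ℕ) ∈
            ({2 ^ (i' : ℕ), 2 ^ (i' : ℕ) + M * ((j' : ℕ) + 1)} : Finset ℕ) := by
          rw [← hl']; simp
        simp only [Finset.mem_insert, Finset.mem_singleton] at hmem1
        have hMle : M ≤ M * ((j' : ℕ) + 1) := Nat.le_mul_of_pos_right M (by omega)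
        have hii : (i : ℕ) = (i' : ℕ) := by
          rcases hmem1 with hmem1 | hmem1
          · exact Nat.pow_right_injective (le_refl 2) hmem1
          · exfalso
            have h1 := hpowlt i
            have h2 : 0 < 2 ^ (i' : ℕ) := pow_pos (by norm_num) _
            omega
        have hmem2 : (2 : ℕ) ^ (i : ℕ) + M * ((j : ℕ) + 1) ∈
            ({2 ^ (i' : ℕ), 2 ^ (i' : ℕ) + M * ((j' : ℕ) + 1)} : Finset ℕ) := by
          rw [← hl']; simp
        simp only [Finset.mem_insert, Finset.mem_singleton] at hmem2
        have hjj : (j : ℕ) = (j' : ℕ) := by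
          rcases hmem2 with hmem2 | hmem2
          · exfalso
            have := hXpos j
            rw [hii] at hmem2
            omega
          · rw [hii] at hmem2
            have : M * ((j : ℕ) + 1) = M * ((j' : ℕ) + 1) := by omega
            have := Nat.eq_of_mul_eq_mul_left hMpos this
            omega
        rw [Sym2.eq_iff]
        exact Or.inl ⟨congrArg Sum.inl (Fin.val_injective hii),
          congrArg Sum.inr (Fin.val_injective hjj)⟩
    · rintro (i | j) (i' | j') h
      · show (f₀ (Sum.inl i) + f₀ (Sum.inl i')).card = _
        rw [hcyclabel]
        simp [hf₀]
      · show (f₀ (Sum.inl i) + f₀ (Sum.inr j')).card = _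
        rw [hjoincard i j']
        have h1 : (f₀ (Sum.inl i)).card = 1 := Finset.card_singleton _
        have h2 : (f₀ (Sum.inr j')).card = 2 :=
          Finset.card_pair (by have := hXpos j'; omega)
        omega
      · show (f₀ (Sum.inr j) + f₀ (Sum.inl i')).card = _
        rw [add_comm, hjoincard i' j]
        have h1 : (f₀ (Sum.inl i')).card = 1 := Finset.card_singleton _
        have h2 : (f₀ (Sum.inr j)).card = 2 :=
          Finset.card_pair (by have := hXpos j; omega)
        omega
      · exact (h : (⊥ : SimpleGraph (Fin m)).Adj j j').elim
  -- the upper bound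
  have hup : monoEdgeCount G f₀ ≤ n' + 2 := by
    set F : Finset (Sym2 (Fin (n' + 2) ⊕ Fin m)) :=
      Finset.univ.image (fun i : Fin (n' + 2) => s(Sum.inl i, Sum.inl (i + 1))) with hF
    have hsub : {e ∈ G.edgeSet | (edgeLabel f₀ e).card = 1} ⊆
        (↑F : Set (Sym2 (Fin (n' + 2) ⊕ Fin m))) := by
      rintro e ⟨he, hc⟩
      rcases hrep e he with ⟨i, rfl⟩ | ⟨i, j, rfl⟩
      · rw [Finset.mem_coe, hF, Finset.mem_image]
        exact ⟨i, Finset.mem_univ i, rfl⟩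
      · exfalso
        have h2 : (edgeLabel f₀ s(Sum.inl i, Sum.inr j)).card = 2 := hjoincard i j
        omega
    calc monoEdgeCount G f₀
        ≤ (↑F : Set (Sym2 (Fin (n' + 2) ⊕ Fin m))).ncard :=
          Set.ncard_le_ncard hsub (Set.toFinite _)
      _ = F.card := Set.ncard_coe_finset F
      _ ≤ (Finset.univ : Finset (Fin (n' + 2))).card := Finset.card_image_le
      _ = n' + 2 := by simp
  -- conclude
  apply le_antisymm
  · exact le_trans (Nat.sInf_le ⟨f₀, hWeak, rfl⟩) hup
  · refine le_csInf ⟨monoEdgeCount G f₀, f₀, hWeak, rfl⟩ ?_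
    rintro k ⟨f, hf, rfl⟩
    exact hlow f hf
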